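/- Let A be an open subset of ℝⁿ contained in the annulus {x : R ≤ |x| < 2R} for some R > 0, and let M_A f(x) = sup_{t>0} ∫_A |f(x+ty)| dy. Then there is a constant c₁ > 0, independent of A and R, such that the weak-type (1,1) operator norm satisfies ‖M_A‖_{L^1→L^{1,∞}} ≥ c₁ Rⁿ |π(A)|, where π : ℝⁿ∖{0} → S^{n−1} is the spherical projection π(x) = x/|x| and |π(A)| denotes the (n−1)-dimensional surface measure of π(A) ⊂ S^{n−1}. -/

import Mathlib

open MeasureTheory Set
open scoped ENNReal
open EMetric
open scoped NNReal Pointwise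

noncomputable section

/-- The maximal operator `M_A f(x) = sup_{t>0} ∫_A |f(x+ty)| dy` associated to a
bounded measurable set `A ⊆ ℝⁿ`. -/
def maxOpSet {n : ℕ} (A : Set (EuclideanSpace ℝ (Fin n)))
    (f : EuclideanSpace ℝ (Fin n) → ℝ) (x : EuclideanSpace ℝ (Fin n)) : ℝ≥0∞ :=
  ⨆ (t : ℝ) (_ : 0 < t), ∫⁻ y in A, (‖f (x + t • y)‖₊ : ℝ≥0∞)

/-- The `L^p`-seminorm of a nonnegative (`ℝ≥0∞`-valued) function, `1 ≤ p ≤ ∞`. -/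
def elpE {α : Type*} [MeasurableSpace α] (g : α → ℝ≥0∞) (p : ℝ≥0∞) (μ : Measure α) :
    ℝ≥0∞ :=
  if p = ∞ then essSup g μ else (∫⁻ x, g x ^ p.toReal ∂μ) ^ (1 / p.toReal)

/-- The spherical projection `π(x) = x/|x|`. -/
def sphProj {n : ℕ} (x : EuclideanSpace ℝ (Fin n)) : EuclideanSpace ℝ (Fin n) :=
  ‖x‖⁻¹ • x

theorem hm_slice_prod {X : Type*} [MetricSpace X] [MeasurableSpace X] [BorelSpace X]
    [SecondCountableTopology X] (S : Set X) {d : ℝ} (hd : 0 ≤ d) (a b : ℝ) :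
    μH[d] S * ENNReal.ofReal (b - a) ≤ μH[d + 1] (S ×ˢ Icc a b) := by
  rcases le_or_gt b a with hba | hab
  · simp [ENNReal.ofReal_eq_zero.2 (by linarith : b - a ≤ 0)]
  rw [Measure.hausdorffMeasure_apply, Measure.hausdorffMeasure_apply, ENNReal.iSup_mul]
  refine iSup_le fun r => ?_
  rw [ENNReal.iSup_mul]
  refine iSup_le fun hr => le_iSup_of_le r (le_iSup_of_le hr ?_)
  refine le_iInf fun t => le_iInf fun hcov => le_iInf fun hdiam => ?_
  set c : ℝ≥0∞ :=
    ⨅ (u : ℕ → Set X) (_ : S ⊆ ⋃ n, u n) (_ : ∀ n, diam (u n) ≤ r),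
      ∑' n, ⨆ _ : (u n).Nonempty, diam (u n) ^ d with hc
  set F : ℝ → ℝ≥0∞ := fun τ =>
    ∑' j, (closure (Prod.snd '' t j)).indicator
      (fun _ => ⨆ _ : (t j).Nonempty, diam (t j) ^ d) τ with hF
  have hFmeas : Measurable F := by
    apply Measurable.ennreal_tsum
    intro j
    exact measurable_const.indicator isClosed_closure.measurableSet
  have key : ∀ τ ∈ Icc a b, c ≤ F τ := by
    intro τ hτ
    set u : ℕ → Set X := fun j => {x | (x, τ) ∈ t j} with hu
    have hucov : S ⊆ ⋃ j, u j := by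
      intro x hx
      rcases mem_iUnion.1 (hcov (show (x, τ) ∈ S ×ˢ Icc a b from ⟨hx, hτ⟩)) with ⟨j, hj⟩
      exact mem_iUnion.2 ⟨j, hj⟩
    have hedist : ∀ (x y : X), edist x y = edist (x, τ) (y, τ) := by
      intro x y; simp [Prod.edist_eq]
    have hud : ∀ j, diam (u j) ≤ diam (t j) := by
      intro j
      refine diam_le fun x hx y hy => ?_
      rw [hedist x y]
      exact edist_le_diam_of_mem hx hy
    have hud' : ∀ j, diam (u j) ≤ r := fun j => (hud j).trans (hdiam j)
    calc c ≤ ∑' j, ⨆ _ : (u j).Nonempty, diam (u j) ^ d := by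
              exact iInf_le_of_le u (iInf_le_of_le hucov (iInf_le_of_le hud' le_rfl))
      _ ≤ F τ := by
          refine ENNReal.tsum_le_tsum fun j => ?_
          rcases isEmpty_or_nonempty (u j).Nonempty with he | hne
          · simp
          · have hne' : (u j).Nonempty := hne.some
            rcases hne' with ⟨x, hx⟩
            have htj : (t j).Nonempty := ⟨(x, τ), hx⟩
            have hτmem : τ ∈ closure (Prod.snd '' t j) :=
              subset_closure ⟨(x, τ), hx, rfl⟩
            rw [Set.indicator_of_mem hτmem]
            simp only [ciSup_pos htj]
            refine iSup_le fun _ => ENNReal.rpow_le_rpow (hud j) hd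
  calc
    c * ENNReal.ofReal (b - a) = ∫⁻ _ in Icc a b, c := by
      rw [setLIntegral_const, Real.volume_Icc]
    _ ≤ ∫⁻ τ in Icc a b, F τ :=
      setLIntegral_mono hFmeas key
    _ ≤ ∑' j, ∫⁻ τ in Icc a b, (closure (Prod.snd '' t j)).indicator
          (fun _ => ⨆ _ : (t j).Nonempty, diam (t j) ^ d) τ := by
      rw [hF]
      rw [lintegral_tsum fun j =>
        (measurable_const.indicator isClosed_closure.measurableSet).aemeasurable]
    _ ≤ ∑' j, ⨆ _ : (t j).Nonempty, diam (t j) ^ (d + 1) := by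
      refine ENNReal.tsum_le_tsum fun j => ?_
      rw [lintegral_indicator isClosed_closure.measurableSet, setLIntegral_const,
        Measure.restrict_apply isClosed_closure.measurableSet]
      rcases isEmpty_or_nonempty (t j).Nonempty with he | hne
      · simp
      · have htj : (t j).Nonempty := hne.some
        simp only [ciSup_pos htj]
        have hvol : volume (closure (Prod.snd '' t j) ∩ Icc a b) ≤ diam (t j) := by
          refine le_trans (measure_mono inter_subset_left) ?_
          refine le_trans (Real.volume_le_diam _) ?_
          rw [EMetric.diam_closure]
          have hle := (LipschitzWith.prod_snd).ediam_image_le (t j)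
          simp only [ENNReal.coe_one, one_mul] at hle
          exact hle
        refine le_trans (mul_le_mul_right hvol _) ?_
        rcases eq_or_ne (diam (t j)) 0 with h0 | h0
        · simp [h0]
        rcases eq_or_ne (diam (t j)) ∞ with hT | hT
        · rw [hT]
          simp [ENNReal.top_rpow_of_pos (by linarith : (0:ℝ) < d + 1)]
        · rw [ENNReal.rpow_add d 1 h0 hT, ENNReal.rpow_one]

lemma norm_sphProj {n : ℕ} {x : EuclideanSpace ℝ (Fin n)} (hx : x ≠ 0) : ‖sphProj x‖ = 1 := by
  rw [sphProj, norm_smul, norm_inv, norm_norm]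
  field_simp [norm_ne_zero_iff.2 hx]

lemma sphProj_smul {n : ℕ} (x : EuclideanSpace ℝ (Fin n)) {t : ℝ} (ht : 0 < t) :
    sphProj (t • x) = sphProj x := by
  rcases eq_or_ne x 0 with rfl | hx
  · simp
  rw [sphProj, sphProj, norm_smul, Real.norm_eq_abs, abs_of_pos ht, smul_smul]
  congr 1
  field_simp

lemma sphProj_dist {n : ℕ} {x y : EuclideanSpace ℝ (Fin n)} {r : ℝ} (hr : 0 < r)
    (hx : r ≤ ‖x‖) (hy : r ≤ ‖y‖) : ‖sphProj x - sphProj y‖ ≤ (2 / r) * ‖x - y‖ := by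
  have hx0 : (0:ℝ) < ‖x‖ := lt_of_lt_of_le hr hx
  have hy0 : (0:ℝ) < ‖y‖ := lt_of_lt_of_le hr hy
  have hid : sphProj x - sphProj y = ‖x‖⁻¹ • (x - y) + (‖x‖⁻¹ - ‖y‖⁻¹) • y := by
    rw [sphProj, sphProj, smul_sub, sub_smul]
    abel
  rw [hid]
  refine le_trans (norm_add_le _ _) ?_
  rw [norm_smul, norm_smul, norm_inv, norm_norm, Real.norm_eq_abs]
  have h1 : ‖x‖⁻¹ * ‖x - y‖ ≤ (1 / r) * ‖x - y‖ := by
    have : ‖x‖⁻¹ ≤ 1 / r := by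
      rw [one_div]
      exact inv_anti₀ hr hx
    exact mul_le_mul_of_nonneg_right this (norm_nonneg _)
  have h2 : |‖x‖⁻¹ - ‖y‖⁻¹| * ‖y‖ ≤ (1 / r) * ‖x - y‖ := by
    have hnn : |‖y‖ - ‖x‖| ≤ ‖x - y‖ := by
      rw [abs_sub_comm]
      exact (abs_norm_sub_norm_le x y)
    have key : |‖x‖⁻¹ - ‖y‖⁻¹| ≤ ‖x - y‖ / (‖x‖ * ‖y‖) := by
      have hdec : ‖x‖⁻¹ - ‖y‖⁻¹ = (‖y‖ - ‖x‖) / (‖x‖ * ‖y‖) := by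
        field_simp
      rw [hdec, abs_div, abs_of_pos (mul_pos hx0 hy0)]
      gcongr
    calc |‖x‖⁻¹ - ‖y‖⁻¹| * ‖y‖ ≤ (‖x - y‖ / (‖x‖ * ‖y‖)) * ‖y‖ :=
          mul_le_mul_of_nonneg_right key (norm_nonneg _)
      _ = ‖x - y‖ / ‖x‖ := by field_simp
      _ ≤ (1 / r) * ‖x - y‖ := by
          rw [one_div, div_eq_mul_inv, mul_comm]
          gcongr
  calc ‖x‖⁻¹ * ‖x - y‖ + |‖x‖⁻¹ - ‖y‖⁻¹| * ‖y‖ ≤ (1/r) * ‖x-y‖ + (1/r) * ‖x-y‖ :=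
        add_le_add h1 h2
    _ = (2 / r) * ‖x - y‖ := by ring

lemma hm_le_vol {n : ℕ} (E : Set (EuclideanSpace ℝ (Fin n))) (hE : MeasurableSet E) :
    μH[(n:ℝ)] E ≤
      (((Fintype.card (Fin n) : ℝ≥0) ^ ((1:ℝ≥0∞)/2).toReal : ℝ≥0) : ℝ≥0∞) ^ (n:ℝ)
        * volume E := by
  have h1 := (PiLp.antilipschitzWith_ofLp 2 (fun _ : Fin n => ℝ)).le_hausdorffMeasure_image
    (by positivity : (0:ℝ) ≤ (n:ℝ)) E
  have h2 : (μH[(n:ℝ)] : Measure (Fin n → ℝ)) = volume := by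
    have := hausdorffMeasure_pi_real (ι := Fin n)
    rwa [Fintype.card_fin] at this
  have h3 : (volume : Measure (Fin n → ℝ)) ((WithLp.equiv 2 (∀ _ : Fin n, ℝ)) '' E)
      = volume E := by
    rw [Equiv.image_eq_preimage_symm]
    exact (PiLp.volume_preserving_toLp (Fin n)).measure_preimage hE.nullMeasurableSet
  calc μH[(n:ℝ)] E
      ≤ _ * μH[(n:ℝ)] ((WithLp.equiv 2 (∀ _ : Fin n, ℝ)) '' E) := h1
    _ = _ * volume E := by rw [h2, h3]

set_option maxHeartbeats 1000000 in
/-- **Proposition 4.2 (lower bound).** If `A ⊆ ℝⁿ` is open and contained in the annulus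
`{R ≤ |x| < 2R}`, then every weak-type `(1,1)` constant of `M_A` is at least
`c₁ Rⁿ |π(A)|`, where `c₁ > 0` does not depend on `A` or `R`; that is,
`‖M_A‖_{L¹ → L^{1,∞}} ≥ c₁ Rⁿ |π(A)|`. -/
theorem maxOpSet_weak_type_lower_bound (n : ℕ) :
    ∃ c₁ : ℝ, 0 < c₁ ∧
      ∀ R : ℝ, 0 < R →
        ∀ A : Set (EuclideanSpace ℝ (Fin n)), IsOpen A →
          A ⊆ {x : EuclideanSpace ℝ (Fin n) | R ≤ ‖x‖ ∧ ‖x‖ < 2 * R} →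
          ∀ Cw : ℝ≥0∞,
            (∀ f : EuclideanSpace ℝ (Fin n) → ℝ, MemLp f 1 volume →
              ∀ α : ℝ≥0∞, α ≠ 0 →
                α * volume {x | α < maxOpSet A f x} ≤ Cw * eLpNorm f 1 volume) →
            ENNReal.ofReal (c₁ * R ^ n) * μH[(n : ℝ) - 1] (sphProj '' A) ≤ Cw := by
  classical
  rcases Nat.eq_zero_or_pos n with rfl | hn1
  · refine ⟨1, one_pos, ?_⟩
    intro R hR A hAopen hAsub Cw hCw
    have hA : A = ∅ := by
      ext x
      simp only [mem_empty_iff_false, iff_false]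
      intro hx
      have := (hAsub hx).1
      have hx0 : x = 0 := Subsingleton.elim x 0
      rw [hx0, norm_zero] at this
      linarith
    simp [hA]
  set E := EuclideanSpace ℝ (Fin n)
  set d : ℝ := (n:ℝ) - 1 with hd_def
  have hd : 0 ≤ d := by
    simp only [hd_def, sub_nonneg]
    exact_mod_cast hn1
  have hdn : d + 1 = (n:ℝ) := by ring
  -- constants
  set Kpi : ℝ≥0 := (Fintype.card (Fin n) : ℝ≥0) ^ ((1:ℝ≥0∞)/2).toReal with hKpi
  have hKpi0 : Kpi ≠ 0 := by
    rw [hKpi]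
    apply ne_of_gt
    apply NNReal.rpow_pos
    simp only [Fintype.card_fin]
    exact_mod_cast hn1
  set Cpi : ℝ≥0∞ := ((Kpi : ℝ≥0∞)) ^ (n:ℝ) with hCpi
  have hCpi0 : Cpi ≠ 0 := by
    rw [hCpi]
    exact (ENNReal.rpow_pos (by exact_mod_cast hKpi0.bot_lt) ENNReal.coe_ne_top).ne'
  have hCpit : Cpi ≠ ∞ := by
    rw [hCpi]
    exact ENNReal.rpow_ne_top_of_nonneg (by positivity) ENNReal.coe_ne_top
  set Cg : ℝ≥0∞ := ((2:ℝ≥0) : ℝ≥0∞) ^ (n:ℝ) * Cpi with hCg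
  have hCg0 : Cg ≠ 0 := by
    rw [hCg]
    exact mul_ne_zero (ENNReal.rpow_pos (by norm_num) (by simp)).ne' hCpi0
  have hCgt : Cg ≠ ∞ := by
    rw [hCg]
    exact ENNReal.mul_ne_top (ENNReal.rpow_ne_top_of_nonneg (by positivity) (by simp)) hCpit
  set C₁ : ℝ≥0∞ := ENNReal.ofReal (2^n) with hC₁
  have hC₁0 : C₁ ≠ 0 := by
    rw [hC₁]
    simp only [ne_eq, ENNReal.ofReal_eq_zero, not_le]
    positivity
  have hC₁t : C₁ ≠ ∞ := ENNReal.ofReal_ne_top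
  set C₂ : ℝ≥0∞ := Cg * (2 * ENNReal.ofReal (4^n)) with hC₂
  have hC₂0 : C₂ ≠ 0 := by
    rw [hC₂]
    refine mul_ne_zero hCg0 (mul_ne_zero (by norm_num) ?_)
    simp only [ne_eq, ENNReal.ofReal_eq_zero, not_le]
    positivity
  have hC₂t : C₂ ≠ ∞ := by
    rw [hC₂]
    exact ENNReal.mul_ne_top hCgt (ENNReal.mul_ne_top (by norm_num) ENNReal.ofReal_ne_top)
  have hdiv0 : C₁ / C₂ ≠ 0 := by
    simp only [ne_eq, ENNReal.div_eq_zero_iff, not_or]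
    exact ⟨hC₁0, hC₂t⟩
  have hdivt : C₁ / C₂ ≠ ∞ := by
    simp only [ne_eq, ENNReal.div_eq_top, not_or, not_and_or]
    exact ⟨Or.inr hC₂0, Or.inl hC₁t⟩
  refine ⟨(C₁ / C₂).toReal, ENNReal.toReal_pos hdiv0 hdivt, ?_⟩
  intro R hR A hAopen hAsub Cw hCw
  have h0A : (0 : E) ∉ A := by
    intro h
    have := (hAsub h).1
    rw [norm_zero] at this
    linarith
  have hAcne : Aᶜ.Nonempty := ⟨0, h0A⟩
  -- the compact approximations
  set Ak : ℕ → Set E := fun k => {a | 1/((k:ℝ)+1) ≤ Metric.infDist a Aᶜ} with hAk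
  have hAkA : ∀ k, Ak k ⊆ A := by
    intro k a ha
    have hδ : (0:ℝ) < 1/((k:ℝ)+1) := by positivity
    have : a ∈ Metric.ball a (Metric.infDist a Aᶜ) := by
      rw [Metric.mem_ball, dist_self]
      exact lt_of_lt_of_le hδ ha
    exact Metric.ball_infDist_compl_subset this
  have hballAk : ∀ k, ∀ a ∈ Ak k, Metric.ball a (1/((k:ℝ)+1)) ⊆ A := by
    intro k a ha
    exact subset_trans (Metric.ball_subset_ball ha) Metric.ball_infDist_compl_subset
  have hAkmono : Monotone Ak := by
    intro i j hij a ha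
    simp only [hAk, mem_setOf_eq] at ha ⊢
    refine le_trans ?_ ha
    have hij' : (i:ℝ) + 1 ≤ (j:ℝ) + 1 := by
      have : (i:ℝ) ≤ j := by exact_mod_cast hij
      linarith
    exact div_le_div_of_nonneg_left one_pos.le (by positivity) hij'
  have hAunion : A = ⋃ k, Ak k := by
    apply Subset.antisymm
    · intro a ha
      have hpos : 0 < Metric.infDist a Aᶜ :=
        (hAopen.isClosed_compl.notMem_iff_infDist_pos hAcne).1 (by simpa using ha)
      rcases exists_nat_one_div_lt hpos with ⟨k, hk⟩
      exact mem_iUnion.2 ⟨k, hk.le⟩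
    · exact iUnion_subset hAkA
  have hAkclosed : ∀ k, IsClosed (Ak k) :=
    fun k => isClosed_le continuous_const (Metric.continuous_infDist_pt Aᶜ)
  have hAkcpt : ∀ k, IsCompact (Ak k) := by
    intro k
    apply Metric.isCompact_of_isClosed_isBounded (hAkclosed k)
    apply Bornology.IsBounded.subset (Metric.isBounded_closedBall (x := (0:E)) (r := 2*R))
    intro a ha
    rw [Metric.mem_closedBall, dist_zero_right]
    exact (hAsub (hAkA k ha)).2.le
  have hAk0 : ∀ k, ∀ a ∈ Ak k, a ≠ 0 := by
    intro k a ha h0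
    have := (hAsub (hAkA k ha)).1
    rw [h0, norm_zero] at this
    linarith
  have hsphcont : ∀ (s : Set E), (∀ x ∈ s, x ≠ 0) → ContinuousOn sphProj s := by
    intro s hs
    have : ContinuousOn (fun x : E => ‖x‖⁻¹ • x) s := by
      refine ContinuousOn.smul (ContinuousOn.inv₀ continuous_norm.continuousOn ?_)
        continuousOn_id
      exact fun x hx => norm_ne_zero_iff.2 (hs x hx)
    exact this
  have hTcpt : ∀ k, IsCompact (sphProj '' Ak k) := fun k =>
    (hAkcpt k).image_of_continuousOn (hsphcont _ (hAk0 k))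
  -- main per-k claim
  have main : ∀ k : ℕ, μH[d] (sphProj '' Ak k) * (C₁ * ENNReal.ofReal (R^n)) ≤ C₂ * Cw := by
    intro k
    set δ : ℝ := 1/((k:ℝ)+1) with hδ
    have hδ0 : 0 < δ := by positivity
    set T : Set E := sphProj '' Ak k with hT
    have hTunit : ∀ σ ∈ T, ‖σ‖ = 1 := by
      rintro σ ⟨a, ha, rfl⟩
      exact norm_sphProj (hAk0 k a ha)
    set f : E → ℝ := (Metric.ball (0:E) (4*δ)).indicator (fun _ => (1:ℝ)) with hf
    have hmem : MemLp f 1 volume :=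
      memLp_indicator_const 1 measurableSet_ball 1 (Or.inr measure_ball_lt_top.ne)
    have hsnorm : eLpNorm f 1 volume = volume (Metric.ball (0:E) (4*δ)) := by
      rw [hf, eLpNorm_indicator_const measurableSet_ball one_ne_zero ENNReal.one_ne_top]
      simp
    set B : ℝ≥0∞ := volume (Metric.ball (0:E) δ) with hB
    have hB0 : B ≠ 0 := (Metric.measure_ball_pos volume (0:E) hδ0).ne'
    have hBt : B ≠ ∞ := measure_ball_lt_top.ne
    set α : ℝ≥0∞ := B/2 with hα
    have hα0 : α ≠ 0 := by
      simp only [hα, ne_eq, ENNReal.div_eq_zero_iff, not_or]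
      exact ⟨hB0, by norm_num⟩
    set Eset : Set E := {x | 2*R ≤ ‖x‖ ∧ ‖x‖ ≤ 4*R ∧ sphProj (-x) ∈ T} with hEset
    have hEsub : Eset ⊆ {x | α < maxOpSet A f x} := by
      rintro x ⟨hx1, hx2, σmem⟩
      rcases σmem with ⟨a, haAk, haeq⟩
      have haA : a ∈ A := hAkA k haAk
      obtain ⟨haR, haR2⟩ := hAsub haA
      have ha0 : a ≠ 0 := hAk0 k a haAk
      have hx0 : x ≠ 0 := fun h => by
        rw [h, norm_zero] at hx1; linarith
      have hxn : (0:ℝ) < ‖x‖ := norm_pos_iff.2 hx0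
      have han : (0:ℝ) < ‖a‖ := norm_pos_iff.2 ha0
      set t : ℝ := ‖x‖/‖a‖ with htdef
      have ht : 0 < t := div_pos hxn han
      have ht4 : t ≤ 4 := by
        rw [htdef, div_le_iff₀ han]
        nlinarith
      have hxa : -x = t • a := by
        have h2 : -x = ‖x‖ • sphProj (-x) := by
          rw [sphProj, norm_neg, smul_smul, mul_inv_cancel₀ hxn.ne', one_smul]
        rw [h2, ← haeq, sphProj, smul_smul, htdef, div_eq_mul_inv]
      have hball : Metric.ball a δ ⊆ A := hballAk k a haAk
      have hint : ∀ y ∈ Metric.ball a δ, (‖f (x + t • y)‖₊ : ℝ≥0∞) = 1 := by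
        intro y hy
        have hxeq : x = -(t • a) := by rw [← hxa, neg_neg]
        have hxy : x + t • y = t • (y - a) := by
          rw [hxeq, smul_sub]
          abel
        have hlt : ‖x + t • y‖ < 4*δ := by
          rw [hxy, norm_smul, Real.norm_eq_abs, abs_of_pos ht]
          have h5 : ‖y - a‖ < δ := by
            rw [← dist_eq_norm]
            exact Metric.mem_ball.1 hy
          calc t * ‖y - a‖ < t * δ := by
                exact mul_lt_mul_of_pos_left h5 ht
            _ ≤ 4 * δ := mul_le_mul_of_nonneg_right ht4 hδ0.le
        rw [hf, indicator_of_mem (mem_ball_zero_iff.2 hlt)]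
        simp
      have hstep : α < ∫⁻ y in A, (‖f (x + t • y)‖₊ : ℝ≥0∞) := by
        have hge : volume (Metric.ball a δ) ≤ ∫⁻ y in A, (‖f (x + t • y)‖₊ : ℝ≥0∞) := by
          calc volume (Metric.ball a δ) = ∫⁻ _ in Metric.ball a δ, 1 :=
                (setLIntegral_one _).symm
            _ = ∫⁻ y in Metric.ball a δ, (‖f (x + t • y)‖₊ : ℝ≥0∞) :=
                setLIntegral_congr_fun measurableSet_ball
                  (fun y hy => (hint y hy).symm)
            _ ≤ ∫⁻ y in A, (‖f (x + t • y)‖₊ : ℝ≥0∞) := lintegral_mono_set hball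
        calc α < B := ENNReal.half_lt_self hB0 hBt
          _ = volume (Metric.ball a δ) := (Measure.addHaar_ball_center volume a δ).symm
          _ ≤ _ := hge
      exact lt_of_lt_of_le hstep
        (le_iSup₂ (f := fun (t:ℝ) (_ : 0 < t) => ∫⁻ y in A, (‖f (x + t • y)‖₊ : ℝ≥0∞)) t ht)
    -- weak type consequence
    have hb4 : volume (Metric.ball (0:E) (4*δ)) = ENNReal.ofReal (4^n) * B := by
      have h := Measure.addHaar_ball_mul_of_pos (volume : Measure E) (0:E)
        (by norm_num : (0:ℝ) < 4) δ
      rw [finrank_euclideanSpace_fin] at h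
      rw [hB]
      exact h
    have hweak := hCw f hmem α hα0
    have hvolE : volume Eset ≤ 2 * ENNReal.ofReal (4^n) * Cw := by
      have h1 : α * volume Eset ≤ Cw * (ENNReal.ofReal (4^n) * B) := by
        refine le_trans (mul_le_mul_right (measure_mono hEsub) α) ?_
        rw [← hb4, ← hsnorm]
        exact hweak
      have h2 : (volume Eset / 2) * B ≤ (Cw * ENNReal.ofReal (4^n)) * B := by
        calc (volume Eset / 2) * B = α * volume Eset := by
              rw [hα, div_eq_mul_inv, div_eq_mul_inv]; ring
          _ ≤ Cw * (ENNReal.ofReal (4^n) * B) := h1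
          _ = (Cw * ENNReal.ofReal (4^n)) * B := by ring
      have h3 : volume Eset / 2 ≤ Cw * ENNReal.ofReal (4^n) :=
        (ENNReal.mul_le_mul_iff_left hB0 hBt).1 h2
      calc volume Eset = 2 * (volume Eset / 2) :=
            (ENNReal.mul_div_cancel (by norm_num) ENNReal.ofNat_ne_top).symm
        _ ≤ 2 * (Cw * ENNReal.ofReal (4^n)) := mul_le_mul_right h3 2
        _ = 2 * ENNReal.ofReal (4^n) * Cw := by ring
    -- Eset is closed, hence measurable
    have hTclosed : IsClosed T := (hTcpt k).isClosed
    have hEclosed : IsClosed Eset := by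
      have hC : IsClosed {x : E | 2*R ≤ ‖x‖ ∧ ‖x‖ ≤ 4*R} :=
        IsClosed.inter (isClosed_le continuous_const continuous_norm)
          (isClosed_le continuous_norm continuous_const)
      have hEeq : Eset = {x : E | 2*R ≤ ‖x‖ ∧ ‖x‖ ≤ 4*R} ∩ (fun x => sphProj (-x)) ⁻¹' T := by
        ext x
        simp only [hEset, mem_setOf_eq, mem_inter_iff, mem_preimage]
        tauto
      rw [hEeq]
      refine ContinuousOn.preimage_isClosed_of_isClosed ?_ hC hTclosed
      refine ContinuousOn.comp (g := sphProj) (f := fun x : E => -x) (hsphcont {x : E | x ≠ 0} (fun x hx => hx))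
        continuous_neg.continuousOn ?_
      intro x hx
      simp only [mem_setOf_eq, neg_ne_zero]
      intro h0
      obtain ⟨hx1, -⟩ := hx
      rw [h0, norm_zero] at hx1
      linarith
    have hEmeas : MeasurableSet Eset := hEclosed.measurableSet
    -- the Lipschitz map to the product
    set Φ : E → E × ℝ := fun x => ((2*R) • sphProj (-x), ‖x‖) with hΦ
    have hΦlip : LipschitzOnWith 2 Φ Eset := by
      apply LipschitzOnWith.of_dist_le_mul
      intro x hx y hy
      have h2R : (0:ℝ) < 2*R := by linarith
      rw [Prod.dist_eq]
      rw [NNReal.coe_ofNat]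
      apply max_le
      · rw [dist_eq_norm, ← smul_sub, norm_smul, Real.norm_eq_abs, abs_of_pos h2R]
        have h := sphProj_dist h2R (show 2*R ≤ ‖-x‖ by rw [norm_neg]; exact hx.1)
          (show 2*R ≤ ‖-y‖ by rw [norm_neg]; exact hy.1)
        have hxy : ‖-x - -y‖ = ‖x - y‖ := by
          rw [neg_sub_neg, norm_sub_rev]
        calc (2*R) * ‖sphProj (-x) - sphProj (-y)‖
            ≤ (2*R) * ((2/(2*R)) * ‖-x - -y‖) :=
              mul_le_mul_of_nonneg_left h h2R.le
          _ = 2 * ‖x - y‖ := by rw [hxy]; field_simp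
          _ = 2 * dist x y := by rw [dist_eq_norm]
      · rw [Real.dist_eq]
        have h1 : |‖x‖ - ‖y‖| ≤ ‖x - y‖ := abs_norm_sub_norm_le x y
        rw [dist_eq_norm]
        nlinarith [norm_nonneg (x - y)]
    -- image identity
    have hΦimg : Φ '' Eset = ((2*R) • T) ×ˢ Icc (2*R) (4*R) := by
      apply Subset.antisymm
      · rintro _ ⟨x, ⟨hx1, hx2, hx3⟩, rfl⟩
        exact ⟨smul_mem_smul_set hx3, hx1, hx2⟩
      · rintro ⟨p, s⟩ ⟨hp, hs1, hs2⟩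
        rcases hp with ⟨σ, hσ, rfl⟩
        have hσ1 : ‖σ‖ = 1 := hTunit σ hσ
        have hs0 : 0 < s := lt_of_lt_of_le (by linarith) hs1
        have hnorm : ‖-(s • σ)‖ = s := by
          rw [norm_neg, norm_smul, Real.norm_eq_abs, abs_of_pos hs0, hσ1, mul_one]
        have hproj : sphProj (-(-(s • σ))) = σ := by
          rw [neg_neg, sphProj_smul σ hs0, sphProj, hσ1, inv_one, one_smul]
        refine ⟨-(s • σ), ⟨?_, ?_, ?_⟩, ?_⟩
        · rw [hnorm]; exact hs1
        · rw [hnorm]; exact hs2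
        · rw [hproj]; exact hσ
        · rw [hΦ]
          simp only
          rw [hproj, hnorm]
    -- smul scaling of Hausdorff measure
    have hsmul : μH[d] ((2*R) • T) = ((‖(2*R : ℝ)‖₊ ^ d : ℝ≥0) : ℝ≥0∞) * μH[d] T := by
      have h := MeasureTheory.Measure.hausdorffMeasure_smul₀ (𝕜 := ℝ) hd
        (show (2*R:ℝ) ≠ 0 by positivity) T
      simpa [ENNReal.smul_def] using h
    -- the key coefficient identity
    have h2R : (0:ℝ) < 2*R := by linarith
    have e1 : C₁ * ENNReal.ofReal (R^n) = ENNReal.ofReal ((2*R)^n) := by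
      rw [hC₁, ← ENNReal.ofReal_mul (by positivity), mul_pow]
    have e2 : ((‖(2*R : ℝ)‖₊ ^ d : ℝ≥0) : ℝ≥0∞) * ENNReal.ofReal (4*R - 2*R)
        = ENNReal.ofReal ((2*R)^n) := by
      have h42 : (4*R - 2*R : ℝ) = 2*R := by ring
      rw [h42, ENNReal.coe_rpow_of_nonneg _ hd, ← enorm_eq_nnnorm, Real.enorm_eq_ofReal h2R.le,
        ENNReal.ofReal_rpow_of_pos h2R, ← ENNReal.ofReal_mul (Real.rpow_nonneg h2R.le d)]
      congr 1
      have : ((2*R):ℝ)^(n:ℝ) = (2*R)^d * (2*R) := by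
        rw [← hdn, Real.rpow_add h2R, Real.rpow_one]
      rw [← this, Real.rpow_natCast]
    -- the Hausdorff chain
    have hchain : μH[d] T * (C₁ * ENNReal.ofReal (R^n)) ≤ Cg * volume Eset := by
      rw [e1, ← e2]
      calc μH[d] T * (((‖(2*R : ℝ)‖₊ ^ d : ℝ≥0) : ℝ≥0∞) * ENNReal.ofReal (4*R - 2*R))
          = μH[d] ((2*R) • T) * ENNReal.ofReal (4*R - 2*R) := by rw [hsmul]; ring
        _ ≤ μH[d+1] (((2*R) • T) ×ˢ Icc (2*R) (4*R)) := hm_slice_prod _ hd _ _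
        _ = μH[d+1] (Φ '' Eset) := by rw [hΦimg]
        _ ≤ ((2:ℝ≥0) : ℝ≥0∞)^(d+1) * μH[d+1] Eset :=
            hΦlip.hausdorffMeasure_image_le (by linarith)
        _ ≤ ((2:ℝ≥0) : ℝ≥0∞)^(d+1) * (Cpi * volume Eset) := by
            apply mul_le_mul_right
            rw [hdn]
            have h := hm_le_vol Eset hEmeas
            rw [hCpi, hKpi]
            exact h
        _ = Cg * volume Eset := by rw [hCg, hdn]; ring
    calc μH[d] T * (C₁ * ENNReal.ofReal (R^n)) ≤ Cg * volume Eset := hchain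
      _ ≤ Cg * (2 * ENNReal.ofReal (4^n) * Cw) := mul_le_mul_right hvolE Cg
      _ = C₂ * Cw := by rw [hC₂]; ring
  -- final assembly
  have himg : sphProj '' A = ⋃ k, sphProj '' Ak k := by
    rw [hAunion, image_iUnion]
  have hmono' : Monotone (fun k => sphProj '' Ak k) :=
    fun i j h => image_mono (hAkmono h)
  have hμ : μH[d] (sphProj '' A) = ⨆ k, μH[d] (sphProj '' Ak k) := by
    rw [himg]
    exact hmono'.measure_iUnion
  show ENNReal.ofReal ((C₁/C₂).toReal * R ^ n) * μH[d] (sphProj '' A) ≤ Cw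
  rw [hμ, ENNReal.mul_iSup]
  refine iSup_le fun k => ?_
  rw [← ENNReal.mul_le_mul_iff_left hC₂0 hC₂t]
  calc ENNReal.ofReal ((C₁/C₂).toReal * R^n) * μH[d] (sphProj '' Ak k) * C₂
      = (C₁/C₂) * C₂ * (ENNReal.ofReal (R^n) * μH[d] (sphProj '' Ak k)) := by
        rw [ENNReal.ofReal_mul ENNReal.toReal_nonneg, ENNReal.ofReal_toReal hdivt]
        ring
    _ = μH[d] (sphProj '' Ak k) * (C₁ * ENNReal.ofReal (R^n)) := by
        rw [ENNReal.div_mul_cancel hC₂0 hC₂t]; ring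
    _ ≤ C₂ * Cw := main k
    _ = Cw * C₂ := mul_comm _ _

end
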